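/- Let n_0 be the largest square-free divisor of n and n′ = n/n_0. Then ν(n) = n′ · ν(n_0), where ν(m) denotes the number of minimal elements of the monoid M_m. -/

import Mathlib

/-- The monoid `M_m` of all `α ∈ ℕ^m` with `α_0 + α_1 ε + ⋯ + α_{m-1} ε^{m-1} = 0`,
where `ε = exp(2πi/m)` is the fixed primitive `m`-th root of unity in `ℂ`. -/
noncomputable def cycMonoidC (m : ℕ) : Set (Fin m → ℕ) :=
  {α | ∑ i : Fin m, (α i : ℂ) * Complex.exp (2 * Real.pi * Complex.I / m) ^ (i : ℕ) = 0}

/-- The set of minimal elements of `M_m`: nonzero elements that are not the sum of two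
nonzero elements of `M_m`. -/
noncomputable def cycMinimalC (m : ℕ) : Set (Fin m → ℕ) :=
  {α ∈ cycMonoidC m | α ≠ 0 ∧
    ¬∃ β γ : Fin m → ℕ, β ∈ cycMonoidC m ∧ γ ∈ cycMonoidC m ∧ β ≠ 0 ∧ γ ≠ 0 ∧ α = β + γ}

/-- `ν(m)`: the number of minimal elements of the monoid `M_m`. -/
noncomputable def nuC (m : ℕ) : ℕ := (cycMinimalC m).ncard
open Polynomial
namespace Stmt11Aux
variable {n m k : ℕ}

def idx (hn : n = k * m) (r : Fin k) (q : Fin m) : Fin n :=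
  ⟨(r : ℕ) + k * q, by
    subst hn
    calc (r : ℕ) + k * q < k + k * q := Nat.add_lt_add_right r.2 _
      _ = k * (q + 1) := by ring
      _ ≤ k * m := Nat.mul_le_mul_left _ q.2⟩

/-- the `r`-th section of `α`. -/
def sec (hn : n = k * m) (r : Fin k) (α : Fin n → ℕ) : Fin m → ℕ :=
  fun q => α (idx hn r q)

/-- embed `β` at residue class `r`. -/
def emb (hk : 0 < k) (hn : n = k * m) (r : Fin k) (β : Fin m → ℕ) : Fin n → ℕ :=
  fun i => if (i : ℕ) % k = (r : ℕ) then β ⟨(i : ℕ) / k, Nat.div_lt_of_lt_mul (hn ▸ i.2)⟩ else 0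

lemma idx_mod (hn : n = k * m) (r : Fin k) (q : Fin m) :
    ((idx hn r q : Fin n) : ℕ) % k = r := by
  simp [idx, Nat.add_mul_mod_self_left, Nat.mod_eq_of_lt r.2]

lemma idx_div (hk : 0 < k) (hn : n = k * m) (r : Fin k) (q : Fin m) :
    ((idx hn r q : Fin n) : ℕ) / k = q := by
  simp only [idx]
  rw [Nat.add_mul_div_left _ _ hk, Nat.div_eq_of_lt r.2, zero_add]


lemma idx_surj (hk : 0 < k) (hn : n = k * m) (i : Fin n) :
    ∃ r q, idx hn r q = i := by
  refine ⟨⟨(i : ℕ) % k, Nat.mod_lt _ hk⟩, ⟨(i : ℕ) / k, ?_⟩, ?_⟩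
  · exact Nat.div_lt_of_lt_mul (hn ▸ i.2)
  · apply Fin.ext
    simp [idx, Nat.mod_add_div]

lemma idx_bijective (hk : 0 < k) (hn : n = k * m) :
    Function.Bijective (fun p : Fin k × Fin m => idx hn p.1 p.2) := by
  constructor
  · rintro ⟨r, q⟩ ⟨r', q'⟩ h
    have h1 := congrArg (fun i : Fin n => (i : ℕ) % k) h
    have h2 := congrArg (fun i : Fin n => (i : ℕ) / k) h
    simp only [idx_mod, idx_div hk] at h1 h2
    simp [Prod.ext_iff, Fin.ext_iff, h1, h2]
  · intro i
    obtain ⟨r, q, h⟩ := idx_surj hk hn i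
    exact ⟨(r, q), h⟩

lemma sec_emb (hk : 0 < k) (hn : n = k * m) (r : Fin k) (β : Fin m → ℕ) :
    sec hn r (emb hk hn r β) = β := by
  funext q
  simp only [sec, emb, idx_mod hn r q, eq_self_iff_true, if_true]
  congr 1
  rw [Fin.ext_iff]
  exact idx_div hk hn r q

lemma sec_emb_ne (hk : 0 < k) (hn : n = k * m) {r r' : Fin k} (h : r' ≠ r) (β : Fin m → ℕ) :
    sec hn r' (emb hk hn r β) = 0 := by
  funext q
  have : ((idx hn r' q : Fin n) : ℕ) % k ≠ (r : ℕ) := by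
    rw [idx_mod hn r' q]
    exact fun hc => h (Fin.ext hc)
  simp [sec, emb, this]

lemma sec_add (hn : n = k * m) (r : Fin k) (α β : Fin n → ℕ) :
    sec hn r (α + β) = sec hn r α + sec hn r β := rfl

lemma sec_zero (hn : n = k * m) (r : Fin k) : sec hn r (0 : Fin n → ℕ) = 0 := rfl

lemma emb_add (hk : 0 < k) (hn : n = k * m) (r : Fin k) (β γ : Fin m → ℕ) :
    emb hk hn r (β + γ) = emb hk hn r β + emb hk hn r γ := by
  funext i
  simp only [emb, Pi.add_apply]
  split <;> simp

lemma emb_eq_zero_iff (hk : 0 < k) (hn : n = k * m) (r : Fin k) (β : Fin m → ℕ) :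
    emb hk hn r β = 0 ↔ β = 0 := by
  constructor
  · intro h
    have := congrArg (sec hn r) h
    rwa [sec_emb hk hn, sec_zero] at this
  · rintro rfl
    funext i
    simp only [emb]
    split <;> simp

lemma emb_injective (hk : 0 < k) (hn : n = k * m) (r : Fin k) :
    Function.Injective (emb hk hn r) := by
  intro β β' h
  have := congrArg (sec hn r) h
  rwa [sec_emb hk hn, sec_emb hk hn] at this

lemma emb_apply_idx (hk : 0 < k) (hn : n = k * m) (r : Fin k) (β : Fin m → ℕ) (q : Fin m) :
    emb hk hn r β (idx hn r q) = β q := by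
  have := congrFun (sec_emb hk hn r β) q
  exact this

lemma emb_apply_idx_ne (hk : 0 < k) (hn : n = k * m) {r r' : Fin k} (h : r' ≠ r)
    (β : Fin m → ℕ) (q : Fin m) : emb hk hn r β (idx hn r' q) = 0 := by
  have := congrFun (sec_emb_ne hk hn h β) q
  exact this

lemma emb_eq_emb (hk : 0 < k) (hn : n = k * m) {r r' : Fin k} {β β' : Fin m → ℕ}
    (h : emb hk hn r β = emb hk hn r' β') (hβ : β ≠ 0) : r = r' := by
  by_contra hrr
  obtain ⟨q, hq⟩ : ∃ q, β q ≠ 0 := by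
    by_contra hq; push_neg at hq; exact hβ (funext hq)
  have h1 := congrFun h (idx hn r q)
  rw [emb_apply_idx hk hn, emb_apply_idx_ne hk hn (Ne.symm (by exact fun e => hrr e.symm)) β'] at h1
  · exact hq h1

/-- rest of `α` outside residue class `r`. -/
def rest (r : Fin k) (α : Fin n → ℕ) : Fin n → ℕ :=
  fun i => if (i : ℕ) % k = (r : ℕ) then 0 else α i

lemma sec_rest_self (hn : n = k * m) (r : Fin k) (α : Fin n → ℕ) :
    sec hn r (rest r α) = 0 := by
  funext q
  simp [sec, rest, idx_mod hn r q]

lemma sec_rest_ne (hn : n = k * m) {r r' : Fin k} (h : r' ≠ r) (α : Fin n → ℕ) :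
    sec hn r' (rest r α) = sec hn r' α := by
  funext q
  have : ((idx hn r' q : Fin n) : ℕ) % k ≠ (r : ℕ) := by
    rw [idx_mod hn r' q]; exact fun hc => h (Fin.ext hc)
  simp [sec, rest, this]

lemma split_eq (hk : 0 < k) (hn : n = k * m) (r : Fin k) (α : Fin n → ℕ) :
    α = emb hk hn r (sec hn r α) + rest r α := by
  funext i
  simp only [Pi.add_apply, emb, rest, sec]
  by_cases h : (i : ℕ) % k = (r : ℕ)
  · simp only [h, if_pos rfl, eq_self_iff_true, if_true, add_zero]
    congr 1
    apply Fin.ext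
    simp only [idx]
    rw [← h, Nat.mod_add_div]
  · simp [h]

/-- If all sections except the `r`-th vanish, `α` is an embedding. -/
lemma eq_emb_of_sections (hk : 0 < k) (hn : n = k * m) (r : Fin k) (α : Fin n → ℕ)
    (h : ∀ r', r' ≠ r → sec hn r' α = 0) :
    α = emb hk hn r (sec hn r α) := by
  have hrest : rest r α = 0 := by
    funext i
    obtain ⟨r', q', rfl⟩ := idx_surj hk hn i
    by_cases hr : r' = r
    · subst hr; simp [rest, idx_mod hn r' q']
    · have h0 := congrFun (h r' hr) q'
      simp only [sec] at h0
      simp [rest, h0]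
  conv_lhs => rw [split_eq hk hn r α]
  rw [hrest, add_zero]

lemma pow_mem_span {x : ℂ} (hx : IsIntegral ℚ x) (t : ℕ) :
    x ^ t ∈ Submodule.span ℚ (Set.range fun j : Fin (minpoly ℚ x).natDegree => x ^ (j : ℕ)) := by
  have hP : (minpoly ℚ x).Monic := minpoly.monic hx
  have hdpos : 0 < (minpoly ℚ x).natDegree := minpoly.natDegree_pos hx
  have hP1 : minpoly ℚ x ≠ 1 := by
    intro h; rw [h] at hdpos; simp at hdpos
  have hx' : x ^ t = aeval x ((X : ℚ[X]) ^ t %ₘ minpoly ℚ x) := by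
    conv_lhs => rw [show x ^ t = aeval x ((X : ℚ[X]) ^ t) by simp]
    conv_lhs => rw [← modByMonic_add_div ((X : ℚ[X]) ^ t) (minpoly ℚ x)]
    rw [map_add, map_mul, minpoly.aeval, zero_mul, add_zero]
  rw [hx', aeval_eq_sum_range]
  apply Submodule.sum_mem
  intro i hi
  apply Submodule.smul_mem
  have hideg : i < (minpoly ℚ x).natDegree := by
    have h1 : i < ((X : ℚ[X]) ^ t %ₘ minpoly ℚ x).natDegree + 1 := Finset.mem_range.1 hi
    have h2 := natDegree_modByMonic_lt ((X : ℚ[X]) ^ t) hP hP1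
    omega
  exact Submodule.subset_span ⟨⟨i, hideg⟩, rfl⟩

lemma omega_pow_k {n m k : ℕ} (hm : 0 < m) (hk : 0 < k) (hn : n = k * m) :
    Complex.exp (2 * Real.pi * Complex.I / n) ^ k = Complex.exp (2 * Real.pi * Complex.I / m) := by
  rw [← Complex.exp_nat_mul]
  congr 1
  have hm' : (m : ℂ) ≠ 0 := Nat.cast_ne_zero.2 hm.ne'
  have hk' : (k : ℂ) ≠ 0 := Nat.cast_ne_zero.2 hk.ne'
  have hnc : (n : ℂ) = (k : ℂ) * m := by rw [hn]; push_cast; ring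
  rw [hnc]
  field_simp

/-- key independence lemma -/
lemma key {n m k : ℕ} (hm : 0 < m) (hk : 0 < k) (hn : n = k * m)
    (htot : n.totient = k * m.totient)
    (c : Fin k → ℂ)
    (hc : ∀ r, c r ∈ Submodule.span ℚ
      (Set.range fun q : Fin m => Complex.exp (2 * Real.pi * Complex.I / m) ^ (q : ℕ)))
    (h0 : ∑ r : Fin k, Complex.exp (2 * Real.pi * Complex.I / n) ^ (r : ℕ) * c r = 0) :
    ∀ r, c r = 0 := by
  have hn0 : n ≠ 0 := by subst hn; positivity
  set ω := Complex.exp (2 * Real.pi * Complex.I / n) with hω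
  set ω₀ := Complex.exp (2 * Real.pi * Complex.I / m) with hω₀
  have hprim : IsPrimitiveRoot ω n := Complex.isPrimitiveRoot_exp n hn0
  have hprim₀ : IsPrimitiveRoot ω₀ m := Complex.isPrimitiveRoot_exp m hm.ne'
  have hint : IsIntegral ℚ ω :=
    ⟨X ^ n - C 1, monic_X_pow_sub_C 1 hn0, by simp [hprim.pow_eq_one]⟩
  have hint₀ : IsIntegral ℚ ω₀ :=
    ⟨X ^ m - C 1, monic_X_pow_sub_C 1 hm.ne', by simp [hprim₀.pow_eq_one]⟩
  have hdeg : (minpoly ℚ ω).natDegree = n.totient := by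
    rw [← cyclotomic_eq_minpoly_rat hprim (Nat.pos_of_ne_zero hn0), natDegree_cyclotomic]
  have hdeg₀ : (minpoly ℚ ω₀).natDegree = m.totient := by
    rw [← cyclotomic_eq_minpoly_rat hprim₀ hm, natDegree_cyclotomic]
  have hωk : ω ^ k = ω₀ := omega_pow_k hm hk hn
  -- each c r lies in the span of the first φ(m) powers of ω₀
  have hspan : ∀ r, c r ∈ Submodule.span ℚ
      (Set.range fun j : Fin m.totient => ω₀ ^ (j : ℕ)) := by
    intro r
    have hle : Submodule.span ℚ (Set.range fun q : Fin m => ω₀ ^ (q : ℕ)) ≤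
        Submodule.span ℚ (Set.range fun j : Fin m.totient => ω₀ ^ (j : ℕ)) := by
      rw [Submodule.span_le]
      rintro _ ⟨q, rfl⟩
      have := pow_mem_span hint₀ (q : ℕ)
      rwa [hdeg₀] at this
    exact hle (hc r)
  choose b hb using fun r => (Submodule.mem_span_range_iff_exists_fun ℚ).1 (hspan r)
  have hli : LinearIndependent ℚ fun e : Fin n.totient => ω ^ (e : ℕ) := by
    have h := linearIndependent_pow (K := ℚ) (S := ℂ) ω
    rwa [hdeg] at h
  set g : Fin k × Fin m.totient → Fin n.totient := fun p =>
    ⟨(p.1 : ℕ) + k * p.2, by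
      rw [htot]
      calc (p.1 : ℕ) + k * p.2 < k + k * p.2 := Nat.add_lt_add_right p.1.2 _
        _ = k * (p.2 + 1) := by ring
        _ ≤ k * m.totient := Nat.mul_le_mul_left _ p.2.2⟩ with hg
  have hginj : Function.Injective g := by
    rintro ⟨r, j⟩ ⟨r', j'⟩ h
    have hval : (r : ℕ) + k * j = (r' : ℕ) + k * j' := congrArg Fin.val h
    have h1 : ((r : ℕ) + k * j) % k = ((r' : ℕ) + k * j') % k := by rw [hval]
    have h2 : ((r : ℕ) + k * j) / k = ((r' : ℕ) + k * j') / k := by rw [hval]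
    rw [Nat.add_mul_mod_self_left, Nat.add_mul_mod_self_left,
      Nat.mod_eq_of_lt r.2, Nat.mod_eq_of_lt r'.2] at h1
    rw [Nat.add_mul_div_left _ _ hk, Nat.add_mul_div_left _ _ hk,
      Nat.div_eq_of_lt r.2, Nat.div_eq_of_lt r'.2] at h2
    simp only [zero_add] at h2
    simp [Prod.ext_iff, Fin.ext_iff, h1, h2]
  have hli2 : LinearIndependent ℚ ((fun e : Fin n.totient => ω ^ (e : ℕ)) ∘ g) :=
    hli.comp g hginj
  have hsum : ∑ p : Fin k × Fin m.totient,
      (b p.1 p.2) • ((fun e : Fin n.totient => ω ^ (e : ℕ)) ∘ g) p = 0 := by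
    have : ∀ p : Fin k × Fin m.totient,
        (b p.1 p.2) • ((fun e : Fin n.totient => ω ^ (e : ℕ)) ∘ g) p
          = ω ^ (p.1 : ℕ) * ((b p.1 p.2) • ω₀ ^ (p.2 : ℕ)) := by
      intro p
      simp only [Function.comp, hg]
      rw [← hωk, ← pow_mul, pow_add]
      exact (mul_smul_comm _ _ _).symm
    rw [Fintype.sum_congr _ _ this, Fintype.sum_prod_type]
    calc ∑ r : Fin k, ∑ j : Fin m.totient, ω ^ (r : ℕ) * ((b r j) • ω₀ ^ (j : ℕ))
        = ∑ r : Fin k, ω ^ (r : ℕ) * c r := by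
          refine Finset.sum_congr rfl fun r _ => ?_
          rw [← Finset.mul_sum, hb r]
      _ = 0 := h0
  have hb0 := Fintype.linearIndependent_iff.1 hli2 (fun p => b p.1 p.2) hsum
  intro r
  rw [← hb r]
  refine Finset.sum_eq_zero fun j _ => ?_
  have := hb0 (r, j)
  simp only at this
  rw [this, zero_smul]


lemma zero_mem_monoid (m : ℕ) : (0 : Fin m → ℕ) ∈ cycMonoidC m := by
  simp [cycMonoidC]

lemma mem_monoid_iff {n m k : ℕ} (hm : 0 < m) (hk : 0 < k) (hn : n = k * m)
    (htot : n.totient = k * m.totient) (α : Fin n → ℕ) :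
    α ∈ cycMonoidC n ↔ ∀ r : Fin k, sec hn r α ∈ cycMonoidC m := by
  set ω := Complex.exp (2 * Real.pi * Complex.I / n) with hω
  set ω₀ := Complex.exp (2 * Real.pi * Complex.I / m) with hω₀
  have hωk : ω ^ k = ω₀ := omega_pow_k hm hk hn
  have hre : ∑ i : Fin n, (α i : ℂ) * ω ^ (i : ℕ)
      = ∑ r : Fin k, ω ^ (r : ℕ) * ∑ q : Fin m, ((sec hn r α q : ℕ) : ℂ) * ω₀ ^ (q : ℕ) := by
    rw [show ∑ i : Fin n, (α i : ℂ) * ω ^ (i : ℕ)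
        = ∑ p : Fin k × Fin m, (α (idx hn p.1 p.2) : ℂ) * ω ^ ((idx hn p.1 p.2 : Fin n) : ℕ) from
      (Fintype.sum_bijective _ (idx_bijective hk hn)
        (fun p : Fin k × Fin m => (α (idx hn p.1 p.2) : ℂ) * ω ^ ((idx hn p.1 p.2 : Fin n) : ℕ))
        (fun i : Fin n => (α i : ℂ) * ω ^ (i : ℕ)) (fun p => rfl)).symm]
    rw [Fintype.sum_prod_type]
    refine Finset.sum_congr rfl fun r _ => ?_
    rw [Finset.mul_sum]
    refine Finset.sum_congr rfl fun q _ => ?_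
    show (α (idx hn r q) : ℂ) * ω ^ ((idx hn r q : Fin n) : ℕ)
      = ω ^ (r : ℕ) * (((sec hn r α q : ℕ) : ℂ) * ω₀ ^ (q : ℕ))
    have hval : ((idx hn r q : Fin n) : ℕ) = (r : ℕ) + k * q := rfl
    rw [hval, pow_add, ← hωk, ← pow_mul]
    show (α (idx hn r q) : ℂ) * (ω ^ (r : ℕ) * ω ^ (k * (q : ℕ)))
      = ω ^ (r : ℕ) * (((sec hn r α q : ℕ) : ℂ) * ω ^ (k * (q : ℕ)))
    rw [show sec hn r α q = α (idx hn r q) from rfl]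
    ring
  constructor
  · intro h r
    have hkey := key hm hk hn htot
      (fun r => ∑ q : Fin m, ((sec hn r α q : ℕ) : ℂ) * ω₀ ^ (q : ℕ))
      (fun r => by
        apply Submodule.sum_mem
        intro q _
        have : ((sec hn r α q : ℕ) : ℂ) * ω₀ ^ (q : ℕ)
            = ((sec hn r α q : ℚ)) • ω₀ ^ (q : ℕ) := by
          rw [Rat.smul_def]
          push_cast
          ring
        rw [this]
        exact Submodule.smul_mem _ _ (Submodule.subset_span ⟨q, rfl⟩))
      (by rw [← hre]; exact h)
    exact hkey r
  · intro h
    show ∑ i : Fin n, (α i : ℂ) * ω ^ (i : ℕ) = 0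
    rw [hre]
    refine Finset.sum_eq_zero fun r _ => ?_
    rw [show (∑ q : Fin m, ((sec hn r α q : ℕ) : ℂ) * ω₀ ^ (q : ℕ)) = 0 from h r, mul_zero]


lemma emb_mem_monoid {n m k : ℕ} (hm : 0 < m) (hk : 0 < k) (hn : n = k * m)
    (htot : n.totient = k * m.totient) {β : Fin m → ℕ} (hβ : β ∈ cycMonoidC m) (r : Fin k) :
    emb hk hn r β ∈ cycMonoidC n := by
  rw [mem_monoid_iff hm hk hn htot]
  intro r'
  by_cases h : r' = r
  · subst h; rw [sec_emb hk hn]; exact hβ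
  · rw [sec_emb_ne hk hn h]; exact zero_mem_monoid m

lemma minimal_emb {n m k : ℕ} (hm : 0 < m) (hk : 0 < k) (hn : n = k * m)
    (htot : n.totient = k * m.totient) {β : Fin m → ℕ} (hβ : β ∈ cycMinimalC m) (r : Fin k) :
    emb hk hn r β ∈ cycMinimalC n := by
  obtain ⟨hβM, hβ0, hβmin⟩ := hβ
  refine ⟨emb_mem_monoid hm hk hn htot hβM r, ?_, ?_⟩
  · rw [Ne, emb_eq_zero_iff hk hn]; exact hβ0
  · rintro ⟨γ, δ, hγM, hδM, hγ0, hδ0, hsum⟩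
    -- sections of γ and δ away from r vanish
    have hsec : ∀ r', r' ≠ r → sec hn r' γ = 0 ∧ sec hn r' δ = 0 := by
      intro r' hr'
      have h1 : sec hn r' γ + sec hn r' δ = 0 := by
        rw [← sec_add hn, ← hsum, sec_emb_ne hk hn hr']
      constructor <;> funext q <;>
        · have := congrFun h1 q
          simp only [Pi.add_apply, Pi.zero_apply] at this ⊢
          omega
    have hγe : γ = emb hk hn r (sec hn r γ) :=
      eq_emb_of_sections hk hn r γ (fun r' hr' => (hsec r' hr').1)
    have hδe : δ = emb hk hn r (sec hn r δ) :=
      eq_emb_of_sections hk hn r δ (fun r' hr' => (hsec r' hr').2)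
    apply hβmin
    refine ⟨sec hn r γ, sec hn r δ, ?_, ?_, ?_, ?_, ?_⟩
    · exact (mem_monoid_iff hm hk hn htot γ).1 hγM r
    · exact (mem_monoid_iff hm hk hn htot δ).1 hδM r
    · intro h0; apply hγ0; rw [hγe, h0]; exact (emb_eq_zero_iff hk hn r 0).2 rfl
    · intro h0; apply hδ0; rw [hδe, h0]; exact (emb_eq_zero_iff hk hn r 0).2 rfl
    · apply emb_injective hk hn r
      rw [emb_add hk hn, ← hγe, ← hδe, ← hsum]

lemma minimal_eq_emb {n m k : ℕ} (hm : 0 < m) (hk : 0 < k) (hn : n = k * m)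
    (htot : n.totient = k * m.totient) {α : Fin n → ℕ} (hα : α ∈ cycMinimalC n) :
    ∃ r : Fin k, ∃ β ∈ cycMinimalC m, α = emb hk hn r β := by
  obtain ⟨hαM, hα0, hαmin⟩ := hα
  have hsecM : ∀ r, sec hn r α ∈ cycMonoidC m := (mem_monoid_iff hm hk hn htot α).1 hαM
  -- there is a nonzero section
  obtain ⟨r₀, hr₀⟩ : ∃ r₀, sec hn r₀ α ≠ 0 := by
    by_contra h
    push_neg at h
    apply hα0
    funext i
    obtain ⟨r, q, rfl⟩ := idx_surj hk hn i
    exact congrFun (h r) q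
  -- all other sections vanish
  have huniq : ∀ r', r' ≠ r₀ → sec hn r' α = 0 := by
    intro r' hr'
    by_contra hne
    apply hαmin
    refine ⟨emb hk hn r' (sec hn r' α), rest r' α, ?_, ?_, ?_, ?_, split_eq hk hn r' α⟩
    · exact emb_mem_monoid hm hk hn htot (hsecM r') r'
    · rw [mem_monoid_iff hm hk hn htot]
      intro r''
      by_cases h : r'' = r'
      · subst h; rw [sec_rest_self hn]; exact zero_mem_monoid m
      · rw [sec_rest_ne hn h]; exact hsecM r''
    · rw [Ne, emb_eq_zero_iff hk hn]; exact hne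
    · intro h0
      apply hr₀
      have := congrArg (sec hn r₀) h0
      rwa [sec_rest_ne hn (Ne.symm hr'), sec_zero] at this
  have hαe : α = emb hk hn r₀ (sec hn r₀ α) := eq_emb_of_sections hk hn r₀ α huniq
  refine ⟨r₀, sec hn r₀ α, ⟨hsecM r₀, hr₀, ?_⟩, hαe⟩
  rintro ⟨β₁, β₂, h1M, h2M, h10, h20, hsum⟩
  apply hαmin
  refine ⟨emb hk hn r₀ β₁, emb hk hn r₀ β₂,
    emb_mem_monoid hm hk hn htot h1M r₀, emb_mem_monoid hm hk hn htot h2M r₀, ?_, ?_, ?_⟩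
  · rw [Ne, emb_eq_zero_iff hk hn]; exact h10
  · rw [Ne, emb_eq_zero_iff hk hn]; exact h20
  · rw [hαe, hsum, emb_add hk hn]

lemma minimal_set_eq {n m k : ℕ} (hm : 0 < m) (hk : 0 < k) (hn : n = k * m)
    (htot : n.totient = k * m.totient) :
    cycMinimalC n = (fun p : Fin k × (Fin m → ℕ) => emb hk hn p.1 p.2) ''
      (Set.univ ×ˢ cycMinimalC m) := by
  ext α
  constructor
  · intro hα
    obtain ⟨r, β, hβ, rfl⟩ := minimal_eq_emb hm hk hn htot hα
    exact ⟨(r, β), ⟨Set.mem_univ r, hβ⟩, rfl⟩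
  · rintro ⟨⟨r, β⟩, ⟨-, hβ⟩, rfl⟩
    exact minimal_emb hm hk hn htot hβ r


lemma nu_eq {n m k : ℕ} (hm : 0 < m) (hk : 0 < k) (hn : n = k * m)
    (htot : n.totient = k * m.totient) :
    nuC n = k * nuC m := by
  have hinj : Set.InjOn (fun p : Fin k × (Fin m → ℕ) => emb hk hn p.1 p.2)
      (Set.univ ×ˢ cycMinimalC m) := by
    rintro ⟨r, β⟩ ⟨hr, hβ⟩ ⟨r', β'⟩ ⟨hr', hβ'⟩ h
    simp only at h
    have hβ0 : β ≠ 0 := hβ.2.1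
    have hrr : r = r' := emb_eq_emb hk hn h hβ0
    subst hrr
    have : β = β' := emb_injective hk hn r h
    rw [this]
  rw [nuC, minimal_set_eq hm hk hn htot, Set.ncard_image_of_injOn hinj,
    ← Nat.card_coe_set_eq, Nat.card_congr (Equiv.Set.prod _ _), Nat.card_prod]
  rw [Nat.card_congr (Equiv.Set.univ _), Nat.card_eq_fintype_card, Fintype.card_fin,
    Nat.card_coe_set_eq]
  rfl

end Stmt11Aux

/-- If `n₀` is the largest square-free divisor of `n` and `n' = n/n₀`,
then `ν(n) = n' · ν(n₀)`. -/
theorem stmt_11 (n : ℕ) (hn : 3 ≤ n) :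
    nuC n = (n / ∏ p ∈ n.primeFactors, p) * nuC (∏ p ∈ n.primeFactors, p) := by
  set m := ∏ p ∈ n.primeFactors, p with hmdef
  set k := n / m with hkdef
  have hm : 0 < m := Finset.prod_pos fun p hp => (Nat.prime_of_mem_primeFactors hp).pos
  have hdvd : m ∣ n := Nat.prod_primeFactors_dvd n
  have hk : 0 < k := Nat.div_pos (Nat.le_of_dvd (by omega) hdvd) hm
  have hnkm : n = k * m := (Nat.div_mul_cancel hdvd).symm
  have hpf : m.primeFactors = n.primeFactors :=
    Nat.primeFactors_prod fun p hp => Nat.prime_of_mem_primeFactors hp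
  have htot : n.totient = k * m.totient := by
    have h1 := Nat.totient_eq_div_primeFactors_mul n
    have h2 := Nat.totient_eq_div_primeFactors_mul m
    rw [hpf, ← hmdef, Nat.div_self hm, one_mul] at h2
    rw [h1, h2, ← hmdef, ← hkdef]
  exact Stmt11Aux.nu_eq hm hk hnkm htot
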